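/- Let 1 ≤ k ≤ n be integers, let t ∈ 𝔽_2^n be nonzero, let μ ∈ (0,1), and let α ∈ (1,2). Let P(x) = μ^{w(x)}(1−μ)^{n−w(x)} be the Ber_μ^{⊗n} probability mass function on 𝔽_2^n, set p = (1 − (1 − 2μ)^{w(t)})/2 (so 0 < p < 1), and for b ∈ {0,1} let P_b be the conditional PMF P_b(x) = P(x)·1[⟨x,t⟩ = b] / ∑_{x' : ⟨x',t⟩ = b} P(x'). For each matrix G ∈ 𝔽_2^{k×n} of rank k, define the joint PMF Q_G on 𝔽_2^k × 𝔽_2 by Q_G(u, b) = ∑_{x ∈ 𝔽_2^n : xG^⊤ = u and ⟨x,t⟩ = b} P(x). Then, averaging uniformly over all rank-k matrices G ∈ 𝔽_2^{k×n}: E_G [ ∑_{u ∈ 𝔽_2^k} ∑_{b ∈ {0,1}} Q_G(u,b)^α · 2^{k(α−1)} · ( p^b (1−p)^{1−b} )^{1−α} ] ≤ p · 2^{(α−1)k} · ∑_{x ∈ 𝔽_2^n} P_1(x)^α + (1−p) · 2^{(α−1)k} · ∑_{x ∈ 𝔽_2^n} P_0(x)^α + 1. -/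

import Mathlib

open scoped Classical
open Finset

/-- The `Ber_μ^{⊗n}` probability mass function on `𝔽_2^n`. -/
noncomputable def bernoulliPMF (n : ℕ) (μ : ℝ) (x : Fin n → ZMod 2) : ℝ :=
  μ ^ hammingNorm x * (1 - μ) ^ (n - hammingNorm x)

/-- The conditional PMF of `Ber_μ^{⊗n}` given `⟨x,t⟩ = b`. -/
noncomputable def condBernoulliPMF (n : ℕ) (μ : ℝ) (t : Fin n → ZMod 2)
    (b : ZMod 2) (x : Fin n → ZMod 2) : ℝ :=
  (if (∑ i, x i * t i) = b then bernoulliPMF n μ x else 0) /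
    ∑ x' ∈ Finset.univ.filter
        (fun x' : Fin n → ZMod 2 => (∑ i, x' i * t i) = b),
      bernoulliPMF n μ x'

/-- The joint PMF of `(rG^⊤, ⟨r,t⟩)` for `r ∼ Ber_μ^{⊗n}`. -/
noncomputable def jointPMF (n k : ℕ) (μ : ℝ) (t : Fin n → ZMod 2)
    (G : Matrix (Fin k) (Fin n) (ZMod 2)) (u : Fin k → ZMod 2) (b : ZMod 2) : ℝ :=
  ∑ x ∈ Finset.univ.filter
      (fun x : Fin n → ZMod 2 => G.mulVec x = u ∧ (∑ i, x i * t i) = b),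
    bernoulliPMF n μ x

lemma hn_card (n : ℕ) (x : Fin n → ZMod 2) :
    hammingNorm x = (Finset.univ.filter (fun i => ¬ x i = 0)).card := by
  unfold hammingNorm; congr 1

lemma bern_prod (n : ℕ) (μ : ℝ) (x : Fin n → ZMod 2) :
    bernoulliPMF n μ x = ∏ i, (if x i = 0 then (1 - μ) else μ) := by
  rw [Finset.prod_ite, Finset.prod_const, Finset.prod_const]
  unfold bernoulliPMF
  rw [mul_comm, hn_card]
  congr 2
  have := Finset.card_filter_add_card_filter_not
    (s := (Finset.univ : Finset (Fin n))) (p := fun i => x i = 0)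
  simp only [Finset.card_univ, Fintype.card_fin] at this
  omega

noncomputable def chi (b : ZMod 2) : ℝ := if b = 0 then 1 else -1

lemma zmod2_cases (a : ZMod 2) : a = 0 ∨ a = 1 := by
  revert a; decide

lemma chi_add (a b : ZMod 2) : chi (a + b) = chi a * chi b := by
  rcases zmod2_cases a with h | h <;> rcases zmod2_cases b with h' | h' <;>
    subst h <;> subst h' <;> simp [chi, show ((1:ZMod 2) + 1) = 0 from rfl]

lemma chi_sum {ι : Type*} (s : Finset ι) (f : ι → ZMod 2) :
    chi (∑ i ∈ s, f i) = ∏ i ∈ s, chi (f i) := by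
  induction s using Finset.induction with
  | empty => simp [chi]
  | insert _ _ h ih => rw [Finset.sum_insert h, Finset.prod_insert h, chi_add, ih]

lemma sum_zmod2 (h : ZMod 2 → ℝ) : ∑ a : ZMod 2, h a = h 0 + h 1 := by
  rw [show (Finset.univ : Finset (ZMod 2)) = {0, 1} by decide]
  simp

lemma sum_pi_prod (n : ℕ) (f : Fin n → ZMod 2 → ℝ) :
    ∑ x : Fin n → ZMod 2, ∏ i, f i (x i) = ∏ i, ∑ a : ZMod 2, f i a := by
  rw [Finset.prod_univ_sum]
  rw [Fintype.piFinset_univ]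

lemma sum_bern_char (n : ℕ) (μ : ℝ) (t : Fin n → ZMod 2) :
    ∑ x : Fin n → ZMod 2, bernoulliPMF n μ x * chi (∑ i, x i * t i)
      = (1 - 2 * μ) ^ hammingNorm t := by
  have : ∀ x : Fin n → ZMod 2, bernoulliPMF n μ x * chi (∑ i, x i * t i)
      = ∏ i, ((if x i = 0 then (1 - μ) else μ) * chi (x i * t i)) := by
    intro x
    rw [bern_prod, chi_sum, Finset.prod_mul_distrib]
  rw [Finset.sum_congr rfl (fun x _ => this x)]
  have hfac := sum_pi_prod n (fun i a => (if a = 0 then (1 - μ) else μ) * chi (a * t i))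
  beta_reduce at hfac
  rw [hfac]
  have hper : ∀ i, (∑ a : ZMod 2, (if a = 0 then (1 - μ) else μ) * chi (a * t i))
      = if t i = 0 then 1 else 1 - 2 * μ := by
    intro i
    rw [sum_zmod2]
    rcases zmod2_cases (t i) with h | h <;>
      simp [h, chi, show ((1:ZMod 2)) ≠ 0 by decide] <;> ring
  rw [Finset.prod_congr rfl (fun i _ => hper i), Finset.prod_ite, Finset.prod_const,
    Finset.prod_const, one_pow, one_mul, hn_card]

lemma bern_pos (n : ℕ) (μ : ℝ) (hμ0 : 0 < μ) (hμ1 : μ < 1) (x : Fin n → ZMod 2) :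
    0 < bernoulliPMF n μ x := by
  unfold bernoulliPMF
  have : (0:ℝ) < 1 - μ := by linarith
  positivity

lemma sum_bern (n : ℕ) (μ : ℝ) : ∑ x : Fin n → ZMod 2, bernoulliPMF n μ x = 1 := by
  have : ∀ x : Fin n → ZMod 2, bernoulliPMF n μ x = ∏ i, (if x i = 0 then (1-μ) else μ) :=
    bern_prod n μ
  rw [Finset.sum_congr rfl (fun x _ => this x)]
  have hfac := sum_pi_prod n (fun _ a => if a = 0 then (1 - μ) else μ)
  beta_reduce at hfac
  rw [hfac]
  have : ∀ i : Fin n, (∑ a : ZMod 2, if a = 0 then (1-μ) else μ) = 1 := by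
    intro i
    rw [sum_zmod2]
    norm_num [show ((1:ZMod 2)) ≠ 0 by decide]
  rw [Finset.prod_congr rfl (fun i _ => this i), Finset.prod_const_one]

lemma sum_bern_one (n : ℕ) (μ : ℝ) (t : Fin n → ZMod 2) :
    ∑ x ∈ Finset.univ.filter (fun x : Fin n → ZMod 2 => (∑ i, x i * t i) = 1),
      bernoulliPMF n μ x = (1 - (1 - 2*μ) ^ hammingNorm t) / 2 := by
  have hsplit := Finset.sum_filter_add_sum_filter_not Finset.univ
    (fun x : Fin n → ZMod 2 => (∑ i, x i * t i) = 1) (fun x => bernoulliPMF n μ x)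
  rw [sum_bern] at hsplit
  have hchi := sum_bern_char n μ t
  have hchi' : ∑ x : Fin n → ZMod 2, bernoulliPMF n μ x * chi (∑ i, x i * t i)
      = -(∑ x ∈ Finset.univ.filter (fun x : Fin n → ZMod 2 => (∑ i, x i * t i) = 1),
          bernoulliPMF n μ x)
        + ∑ x ∈ Finset.univ.filter (fun x : Fin n → ZMod 2 => ¬(∑ i, x i * t i) = 1),
          bernoulliPMF n μ x := by
    rw [← Finset.sum_filter_add_sum_filter_not Finset.univ
      (fun x : Fin n → ZMod 2 => (∑ i, x i * t i) = 1)
      (fun x => bernoulliPMF n μ x * chi (∑ i, x i * t i)), neg_eq_neg_one_mul,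
      Finset.mul_sum]
    congr 1
    · apply Finset.sum_congr rfl
      intro x hx
      simp only [Finset.mem_filter] at hx
      rw [hx.2]
      simp [chi, show ((1:ZMod 2)) ≠ 0 by decide]
    · apply Finset.sum_congr rfl
      intro x hx
      simp only [Finset.mem_filter] at hx
      rcases zmod2_cases (∑ i, x i * t i) with h | h
      · rw [h]; simp [chi]
      · exact absurd h hx.2
  rw [hchi] at hchi'
  linarith

lemma sum_bern_zero (n : ℕ) (μ : ℝ) (t : Fin n → ZMod 2) :
    ∑ x ∈ Finset.univ.filter (fun x : Fin n → ZMod 2 => (∑ i, x i * t i) = 0),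
      bernoulliPMF n μ x = 1 - (1 - (1 - 2*μ) ^ hammingNorm t) / 2 := by
  have hsplit := Finset.sum_filter_add_sum_filter_not Finset.univ
    (fun x : Fin n → ZMod 2 => (∑ i, x i * t i) = 0) (fun x => bernoulliPMF n μ x)
  rw [sum_bern] at hsplit
  have h1 := sum_bern_one n μ t
  have : (Finset.univ.filter (fun x : Fin n → ZMod 2 => ¬(∑ i, x i * t i) = 0))
      = (Finset.univ.filter (fun x : Fin n → ZMod 2 => (∑ i, x i * t i) = 1)) := by
    apply Finset.filter_congr
    intro x _
    rcases zmod2_cases (∑ i, x i * t i) with h | h <;> simp [h]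
  rw [this, h1] at hsplit
  linarith

lemma rank_eq_iff_surj (n k : ℕ) (G : Matrix (Fin k) (Fin n) (ZMod 2)) :
    G.rank = k ↔ Function.Surjective G.mulVec := by
  constructor
  · intro h
    have hr : LinearMap.range G.mulVecLin = ⊤ := by
      apply Submodule.eq_top_of_finrank_eq
      rw [← Matrix.rank, h, Module.finrank_fin_fun]
    intro u
    obtain ⟨x, hx⟩ := LinearMap.range_eq_top.mp hr u
    exact ⟨x, hx⟩
  · intro h
    have hr : LinearMap.range G.mulVecLin = ⊤ := LinearMap.range_eq_top.mpr h
    rw [Matrix.rank, hr, finrank_top, Module.finrank_fin_fun]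

lemma exists_rank_k (n k : ℕ) (hkn : k ≤ n) :
    ∃ G : Matrix (Fin k) (Fin n) (ZMod 2), G.rank = k := by
  refine ⟨Matrix.of (fun i l => if (l : ℕ) = (i : ℕ) then 1 else 0), ?_⟩
  rw [rank_eq_iff_surj]
  intro u
  refine ⟨fun l => if h : (l : ℕ) < k then u ⟨l, h⟩ else 0, ?_⟩
  ext i
  rw [Matrix.mulVec]
  simp only [Matrix.of_apply, dotProduct]
  rw [Finset.sum_eq_single (⟨(i : ℕ), lt_of_lt_of_le i.isLt hkn⟩ : Fin n)]
  · simp [i.isLt]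
  · intro l _ hl
    have : (l : ℕ) ≠ (i : ℕ) := by
      intro h; apply hl; ext; exact h
    simp [this]
  · simp

lemma count_ker (n k : ℕ) (v : Fin n → ZMod 2) (hv : v ≠ 0) :
    (Finset.univ.filter (fun G : Matrix (Fin k) (Fin n) (ZMod 2) =>
        G.rank = k ∧ G.mulVec v = 0)).card * 2 ^ k
      ≤ (Finset.univ.filter
          (fun G : Matrix (Fin k) (Fin n) (ZMod 2) => G.rank = k)).card := by
  obtain ⟨j, hj⟩ : ∃ j, v j ≠ 0 := by
    by_contra h
    push_neg at h
    exact hv (funext fun j => h j)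
  have hj1 : v j = 1 := (zmod2_cases (v j)).resolve_left hj
  set E : (Fin k → ZMod 2) → Matrix (Fin k) (Fin n) (ZMod 2) :=
    fun w => Matrix.of (fun i l => if l = j then w i else 0) with hE
  have hEmul : ∀ (w : Fin k → ZMod 2) (x : Fin n → ZMod 2),
      (E w).mulVec x = fun i => w i * x j := by
    intro w x
    ext i
    rw [Matrix.mulVec]
    simp only [hE, Matrix.of_apply, dotProduct]
    rw [Finset.sum_eq_single j]
    · simp
    · intro l _ hl; simp [hl]
    · simp
  have key : ∀ p ∈ (Finset.univ.filter (fun G : Matrix (Fin k) (Fin n) (ZMod 2) =>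
        G.rank = k ∧ G.mulVec v = 0)) ×ˢ (Finset.univ : Finset (Fin k → ZMod 2)),
      (p.1 + E p.2) ∈ Finset.univ.filter
        (fun G : Matrix (Fin k) (Fin n) (ZMod 2) => G.rank = k) := by
    rintro ⟨G, w⟩ hp
    simp only [Finset.mem_product, Finset.mem_filter, Finset.mem_univ, true_and] at hp ⊢
    obtain ⟨⟨hrank, hker⟩, -⟩ := hp
    rw [rank_eq_iff_surj] at hrank ⊢
    intro u
    obtain ⟨x, hx⟩ := hrank u
    by_cases hxj : x j = 0
    · refine ⟨x, ?_⟩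
      rw [Matrix.add_mulVec, hEmul, hx]
      ext i; simp [hxj]
    · refine ⟨x + v, ?_⟩
      rw [Matrix.add_mulVec, hEmul, Matrix.mulVec_add, hx, hker]
      have hxj1 : x j = 1 := (zmod2_cases (x j)).resolve_left hxj
      ext i
      simp [hxj1, hj1, show ((1:ZMod 2) + 1) = 0 from rfl]
  have hinj : Set.InjOn (fun p : Matrix (Fin k) (Fin n) (ZMod 2) × (Fin k → ZMod 2) =>
      p.1 + E p.2)
      (((Finset.univ.filter (fun G : Matrix (Fin k) (Fin n) (ZMod 2) =>
        G.rank = k ∧ G.mulVec v = 0)) ×ˢ (Finset.univ : Finset (Fin k → ZMod 2)) :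
        Finset (Matrix (Fin k) (Fin n) (ZMod 2) × (Fin k → ZMod 2))) :
        Set (Matrix (Fin k) (Fin n) (ZMod 2) × (Fin k → ZMod 2))) := by
    rintro ⟨G1, w1⟩ h1 ⟨G2, w2⟩ h2 heq
    simp only [Finset.mem_coe, Finset.mem_product, Finset.mem_filter,
      Finset.mem_univ, true_and] at h1 h2
    simp only at heq
    have hmv : (G1 + E w1).mulVec v = (G2 + E w2).mulVec v := by rw [heq]
    rw [Matrix.add_mulVec, Matrix.add_mulVec, hEmul, hEmul, h1.1.2, h2.1.2] at hmv
    have hw : w1 = w2 := by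
      funext i
      have := congrFun hmv i
      simpa [hj1] using this
    have hG : G1 = G2 := by
      have := heq
      rw [hw] at this
      exact add_right_cancel this
    rw [hG, hw]
  have hcard := Finset.card_le_card_of_injOn _ key hinj
  rw [Finset.card_product] at hcard
  simpa using hcard

lemma rpow_add_le_real (a b p : ℝ) (ha : 0 ≤ a) (hb : 0 ≤ b) (hp : 0 ≤ p) (hp1 : p ≤ 1) :
    (a + b) ^ p ≤ a ^ p + b ^ p := by
  lift a to NNReal using ha
  lift b to NNReal using hb
  have := NNReal.rpow_add_le_add_rpow a b hp hp1
  exact_mod_cast this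

lemma jensen_rpow {ι : Type*} (s : Finset ι) (hs : s.Nonempty) (R : ι → ℝ)
    (hR : ∀ i ∈ s, 0 ≤ R i) (β : ℝ) (hβ0 : 0 < β) (hβ1 : β ≤ 1) :
    ∑ i ∈ s, (1/(s.card:ℝ)) * (R i) ^ β ≤ (∑ i ∈ s, (1/(s.card:ℝ)) * R i) ^ β := by
  have hcard : (0:ℝ) < s.card := by
    exact_mod_cast Finset.card_pos.mpr hs
  have hw : ∑ _i ∈ s, (1/(s.card:ℝ)) = 1 := by
    rw [Finset.sum_const, nsmul_eq_mul]
    field_simp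
  have hp : 1 ≤ 1/β := by
    rw [le_div_iff₀ hβ0]; linarith
  have := Real.arith_mean_le_rpow_mean s (fun _ => 1/(s.card:ℝ)) (fun i => (R i) ^ β)
    (fun i _ => by positivity) hw (fun i hi => Real.rpow_nonneg (hR i hi) β) hp
  have hz : ∀ i ∈ s, ((R i) ^ β) ^ (1/β) = R i := by
    intro i hi
    rw [← Real.rpow_mul (hR i hi), mul_one_div, div_self (ne_of_gt hβ0), Real.rpow_one]
  refine le_trans ?_ (le_trans this (le_of_eq ?_))
  · apply le_of_eq
    apply Finset.sum_congr rfl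
    intro i hi
    simp only
  · rw [one_div_one_div]
    congr 1
    apply Finset.sum_congr rfl
    intro i hi
    rw [hz i hi]

noncomputable def Rem (n k : ℕ) (μ : ℝ) (t : Fin n → ZMod 2) (b : ZMod 2)
    (G : Matrix (Fin k) (Fin n) (ZMod 2)) (x : Fin n → ZMod 2) : ℝ :=
  ∑ x' ∈ ((Finset.univ.filter (fun x' : Fin n → ZMod 2 => (∑ i, x' i * t i) = b)).erase x).filter
      (fun x' => G.mulVec x' = G.mulVec x), bernoulliPMF n μ x'

lemma Rem_nonneg (n k : ℕ) (μ : ℝ) (hμ0 : 0 < μ) (hμ1 : μ < 1) (t : Fin n → ZMod 2)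
    (b : ZMod 2) (G : Matrix (Fin k) (Fin n) (ZMod 2)) (x : Fin n → ZMod 2) :
    0 ≤ Rem n k μ t b G x :=
  Finset.sum_nonneg fun x' _ => (bern_pos n μ hμ0 hμ1 x').le

lemma stepA (n k : ℕ) (μ : ℝ) (hμ0 : 0 < μ) (hμ1 : μ < 1) (t : Fin n → ZMod 2)
    (b : ZMod 2) (α : ℝ) (hα1 : 1 < α) (hα2 : α < 2)
    (G : Matrix (Fin k) (Fin n) (ZMod 2)) :
    ∑ u : Fin k → ZMod 2, (jointPMF n k μ t G u b) ^ α
      ≤ ∑ x ∈ Finset.univ.filter (fun x : Fin n → ZMod 2 => (∑ i, x i * t i) = b),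
          ((bernoulliPMF n μ x) ^ α + bernoulliPMF n μ x * (Rem n k μ t b G x) ^ (α - 1)) := by
  set S := Finset.univ.filter (fun x : Fin n → ZMod 2 => (∑ i, x i * t i) = b) with hS
  have hfib : ∀ u, Finset.univ.filter
      (fun x : Fin n → ZMod 2 => G.mulVec x = u ∧ (∑ i, x i * t i) = b)
      = S.filter (fun x => G.mulVec x = u) := by
    intro u
    rw [hS, Finset.filter_filter]
    apply Finset.filter_congr
    intro x _
    exact and_comm
  have key : ∀ u : Fin k → ZMod 2, (jointPMF n k μ t G u b) ^ α
      ≤ ∑ x ∈ S.filter (fun x => G.mulVec x = u),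
          ((bernoulliPMF n μ x) ^ α + bernoulliPMF n μ x * (Rem n k μ t b G x) ^ (α - 1)) := by
    intro u
    have hQ : jointPMF n k μ t G u b = ∑ x ∈ S.filter (fun x => G.mulVec x = u),
        bernoulliPMF n μ x := by
      rw [jointPMF, hfib u]
    rcases Finset.eq_empty_or_nonempty (S.filter (fun x => G.mulVec x = u)) with he | hne
    · rw [hQ, he]
      simp [Real.zero_rpow (by linarith : α ≠ 0)]
    · have hQpos : 0 < jointPMF n k μ t G u b := by
        rw [hQ]
        exact Finset.sum_pos (fun x _ => bern_pos n μ hμ0 hμ1 x) hne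
      have hsplit : ∀ x ∈ S.filter (fun x => G.mulVec x = u),
          jointPMF n k μ t G u b = bernoulliPMF n μ x + Rem n k μ t b G x := by
        intro x hx
        obtain ⟨hxS, hxu⟩ := Finset.mem_filter.mp hx
        rw [hQ, ← Finset.add_sum_erase _ _ hx]
        congr 1
        rw [Rem, ← hxu]
        congr 1
        rw [Finset.filter_erase]
      have hpow : jointPMF n k μ t G u b ^ α
          = ∑ x ∈ S.filter (fun x => G.mulVec x = u),
              bernoulliPMF n μ x * (jointPMF n k μ t G u b) ^ (α - 1) := by
        rw [← Finset.sum_mul, ← hQ]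
        have h1 : α = 1 + (α - 1) := by ring
        rw [h1, Real.rpow_add hQpos, Real.rpow_one]
        ring_nf
      rw [hpow]
      apply Finset.sum_le_sum
      intro x hx
      have hPpos := bern_pos n μ hμ0 hμ1 x
      have hRnn := Rem_nonneg n k μ hμ0 hμ1 t b G x
      calc bernoulliPMF n μ x * (jointPMF n k μ t G u b) ^ (α - 1)
          = bernoulliPMF n μ x * (bernoulliPMF n μ x + Rem n k μ t b G x) ^ (α - 1) := by
            rw [← hsplit x hx]
        _ ≤ bernoulliPMF n μ x
            * ((bernoulliPMF n μ x) ^ (α - 1) + (Rem n k μ t b G x) ^ (α - 1)) := by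
            apply mul_le_mul_of_nonneg_left _ hPpos.le
            exact rpow_add_le_real _ _ _ hPpos.le hRnn (by linarith) (by linarith)
        _ = (bernoulliPMF n μ x) ^ α + bernoulliPMF n μ x * (Rem n k μ t b G x) ^ (α - 1) := by
            rw [mul_add]
            congr 1
            have h1 : α = 1 + (α - 1) := by ring
            nth_rewrite 2 [h1]
            rw [Real.rpow_add hPpos, Real.rpow_one]
  calc ∑ u : Fin k → ZMod 2, (jointPMF n k μ t G u b) ^ α
      ≤ ∑ u : Fin k → ZMod 2, ∑ x ∈ S.filter (fun x => G.mulVec x = u),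
          ((bernoulliPMF n μ x) ^ α + bernoulliPMF n μ x * (Rem n k μ t b G x) ^ (α - 1)) :=
        Finset.sum_le_sum fun u _ => key u
    _ = _ := Finset.sum_fiberwise S (fun x => G.mulVec x) _

lemma avg_Rem (n k : ℕ) (μ : ℝ) (hμ0 : 0 < μ) (hμ1 : μ < 1) (t : Fin n → ZMod 2)
    (b : ZMod 2) (x : Fin n → ZMod 2) :
    ∑ G ∈ Finset.univ.filter
        (fun G : Matrix (Fin k) (Fin n) (ZMod 2) => G.rank = k), Rem n k μ t b G x
      ≤ ((Finset.univ.filter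
          (fun G : Matrix (Fin k) (Fin n) (ZMod 2) => G.rank = k)).card : ℝ)
        * ((2 ^ k : ℝ)⁻¹
          * ∑ x' ∈ Finset.univ.filter (fun x' : Fin n → ZMod 2 => (∑ i, x' i * t i) = b),
              bernoulliPMF n μ x') := by
  classical
  set ranked := Finset.univ.filter
    (fun G : Matrix (Fin k) (Fin n) (ZMod 2) => G.rank = k) with hranked
  set S := Finset.univ.filter (fun x' : Fin n → ZMod 2 => (∑ i, x' i * t i) = b) with hSdef
  set N := (ranked.card : ℝ) with hN
  have hswap : ∑ G ∈ ranked, Rem n k μ t b G x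
      = ∑ x' ∈ S.erase x, bernoulliPMF n μ x'
          * ((ranked.filter (fun G => G.mulVec x' = G.mulVec x)).card : ℝ) := by
    have h1 : ∀ G, Rem n k μ t b G x
        = ∑ x' ∈ S.erase x,
            (if G.mulVec x' = G.mulVec x then bernoulliPMF n μ x' else 0) := by
      intro G
      rw [Rem, Finset.sum_filter]
    rw [Finset.sum_congr rfl (fun G _ => h1 G), Finset.sum_comm]
    apply Finset.sum_congr rfl
    intro x' _
    rw [← Finset.sum_filter, Finset.sum_const, nsmul_eq_mul, mul_comm]
  rw [hswap]
  have hbound : ∀ x' ∈ S.erase x,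
      ((ranked.filter (fun G => G.mulVec x' = G.mulVec x)).card : ℝ) ≤ N * (2 ^ k : ℝ)⁻¹ := by
    intro x' hx'
    have hne : x' - x ≠ 0 := sub_ne_zero.mpr (Finset.ne_of_mem_erase hx')
    have hcount := count_ker n k (x' - x) hne
    have heq : ranked.filter (fun G => G.mulVec x' = G.mulVec x)
        = Finset.univ.filter (fun G : Matrix (Fin k) (Fin n) (ZMod 2) =>
            G.rank = k ∧ G.mulVec (x' - x) = 0) := by
      rw [hranked, Finset.filter_filter]
      apply Finset.filter_congr
      intro G _
      constructor
      · rintro ⟨h1, h2⟩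
        exact ⟨h1, by rw [Matrix.mulVec_sub, h2, sub_self]⟩
      · rintro ⟨h1, h2⟩
        refine ⟨h1, ?_⟩
        rw [Matrix.mulVec_sub] at h2
        exact sub_eq_zero.mp h2
    rw [heq]
    rw [hN]
    rw [mul_comm, inv_mul_eq_div, le_div_iff₀ (by positivity : (0:ℝ) < (2:ℝ)^k)]
    exact_mod_cast hcount
  calc ∑ x' ∈ S.erase x, bernoulliPMF n μ x'
          * ((ranked.filter (fun G => G.mulVec x' = G.mulVec x)).card : ℝ)
      ≤ ∑ x' ∈ S.erase x, bernoulliPMF n μ x' * (N * (2 ^ k : ℝ)⁻¹) := by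
        apply Finset.sum_le_sum
        intro x' hx'
        exact mul_le_mul_of_nonneg_left (hbound x' hx') (bern_pos n μ hμ0 hμ1 x').le
    _ = (N * (2 ^ k : ℝ)⁻¹) * ∑ x' ∈ S.erase x, bernoulliPMF n μ x' := by
        rw [← Finset.sum_mul, mul_comm]
    _ ≤ (N * (2 ^ k : ℝ)⁻¹) * ∑ x' ∈ S, bernoulliPMF n μ x' := by
        apply mul_le_mul_of_nonneg_left _ (by positivity)
        apply Finset.sum_le_sum_of_subset_of_nonneg (Finset.erase_subset x S)
        intro x' _ _
        exact (bern_pos n μ hμ0 hμ1 x').le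
    _ = N * ((2 ^ k : ℝ)⁻¹ * ∑ x' ∈ S, bernoulliPMF n μ x') := by ring

lemma main_b (n k : ℕ) (hkn : k ≤ n) (μ : ℝ) (hμ0 : 0 < μ) (hμ1 : μ < 1)
    (t : Fin n → ZMod 2) (b : ZMod 2) (α : ℝ) (hα1 : 1 < α) (hα2 : α < 2) :
    (1 / ((Finset.univ.filter
        (fun G : Matrix (Fin k) (Fin n) (ZMod 2) => G.rank = k)).card : ℝ)) *
      ∑ G ∈ Finset.univ.filter
          (fun G : Matrix (Fin k) (Fin n) (ZMod 2) => G.rank = k),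
        ∑ u : Fin k → ZMod 2, (jointPMF n k μ t G u b) ^ α
    ≤ (∑ x ∈ Finset.univ.filter (fun x : Fin n → ZMod 2 => (∑ i, x i * t i) = b),
          (bernoulliPMF n μ x) ^ α)
      + (∑ x ∈ Finset.univ.filter (fun x : Fin n → ZMod 2 => (∑ i, x i * t i) = b),
          bernoulliPMF n μ x)
        * ((2 ^ k : ℝ)⁻¹
            * ∑ x ∈ Finset.univ.filter (fun x : Fin n → ZMod 2 => (∑ i, x i * t i) = b),
                bernoulliPMF n μ x) ^ (α - 1) := by
  classical
  set ranked := Finset.univ.filter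
    (fun G : Matrix (Fin k) (Fin n) (ZMod 2) => G.rank = k) with hranked
  set S := Finset.univ.filter (fun x : Fin n → ZMod 2 => (∑ i, x i * t i) = b) with hSdef
  set pb := ∑ x ∈ S, bernoulliPMF n μ x with hpb
  have hne : ranked.Nonempty := by
    obtain ⟨G0, hG0⟩ := exists_rank_k n k hkn
    exact ⟨G0, by simp [hranked, hG0]⟩
  have hNpos : (0:ℝ) < (ranked.card : ℝ) := by
    exact_mod_cast Finset.card_pos.mpr hne
  set N := (ranked.card : ℝ) with hN
  have hβ0 : (0:ℝ) < α - 1 := by linarith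
  have hβ1 : α - 1 ≤ 1 := by linarith
  have hpbnn : 0 ≤ pb := Finset.sum_nonneg fun x _ => (bern_pos n μ hμ0 hμ1 x).le
  calc (1 / N) * ∑ G ∈ ranked, ∑ u : Fin k → ZMod 2, (jointPMF n k μ t G u b) ^ α
      ≤ (1 / N) * ∑ G ∈ ranked, ∑ x ∈ S,
          ((bernoulliPMF n μ x) ^ α
            + bernoulliPMF n μ x * (Rem n k μ t b G x) ^ (α - 1)) := by
        apply mul_le_mul_of_nonneg_left _ (by positivity)
        exact Finset.sum_le_sum fun G _ => stepA n k μ hμ0 hμ1 t b α hα1 hα2 G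
    _ = (∑ x ∈ S, (bernoulliPMF n μ x) ^ α)
        + ∑ x ∈ S, bernoulliPMF n μ x
            * (∑ G ∈ ranked, (1 / N) * (Rem n k μ t b G x) ^ (α - 1)) := by
        rw [Finset.sum_congr rfl (fun G (_ : G ∈ ranked) => Finset.sum_add_distrib),
          Finset.sum_add_distrib, Finset.sum_const, Finset.sum_comm, mul_add]
        congr 1
        · rw [nsmul_eq_mul, ← mul_assoc, one_div, inv_mul_cancel₀ (ne_of_gt hNpos), one_mul]
        · rw [Finset.mul_sum]
          apply Finset.sum_congr rfl
          intro x _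
          rw [Finset.mul_sum, Finset.mul_sum]
          apply Finset.sum_congr rfl
          intro G _
          ring
    _ ≤ (∑ x ∈ S, (bernoulliPMF n μ x) ^ α)
        + ∑ x ∈ S, bernoulliPMF n μ x * ((2 ^ k : ℝ)⁻¹ * pb) ^ (α - 1) := by
        apply add_le_add le_rfl
        apply Finset.sum_le_sum
        intro x _
        apply mul_le_mul_of_nonneg_left _ (bern_pos n μ hμ0 hμ1 x).le
        calc ∑ G ∈ ranked, (1 / N) * (Rem n k μ t b G x) ^ (α - 1)
            ≤ (∑ G ∈ ranked, (1 / N) * Rem n k μ t b G x) ^ (α - 1) :=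
              jensen_rpow ranked hne _ (fun G _ => Rem_nonneg n k μ hμ0 hμ1 t b G x)
                (α - 1) hβ0 hβ1
          _ ≤ ((2 ^ k : ℝ)⁻¹ * pb) ^ (α - 1) := by
              apply Real.rpow_le_rpow _ _ (le_of_lt hβ0)
              · apply Finset.sum_nonneg
                intro G _
                have := Rem_nonneg n k μ hμ0 hμ1 t b G x
                positivity
              · rw [← Finset.mul_sum]
                have := avg_Rem n k μ hμ0 hμ1 t b x
                rw [← hranked, ← hSdef, ← hpb, ← hN] at this
                calc (1 / N) * ∑ G ∈ ranked, Rem n k μ t b G x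
                    ≤ (1 / N) * (N * ((2 ^ k : ℝ)⁻¹ * pb)) := by
                      apply mul_le_mul_of_nonneg_left this (by positivity)
                  _ = (2 ^ k : ℝ)⁻¹ * pb := by
                      field_simp
        done
    _ = (∑ x ∈ S, (bernoulliPMF n μ x) ^ α) + pb * ((2 ^ k : ℝ)⁻¹ * pb) ^ (α - 1) := by
        rw [← Finset.sum_mul]

lemma sum_cond_pow (n : ℕ) (μ : ℝ) (t : Fin n → ZMod 2) (b : ZMod 2) (α : ℝ)
    (hα0 : α ≠ 0) (hμ0 : 0 < μ) (hμ1 : μ < 1) :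
    ∑ x : Fin n → ZMod 2, (condBernoulliPMF n μ t b x) ^ α
      = (∑ x ∈ Finset.univ.filter (fun x : Fin n → ZMod 2 => (∑ i, x i * t i) = b),
          (bernoulliPMF n μ x) ^ α)
        / (∑ x ∈ Finset.univ.filter (fun x : Fin n → ZMod 2 => (∑ i, x i * t i) = b),
            bernoulliPMF n μ x) ^ α := by
  classical
  set S := Finset.univ.filter (fun x : Fin n → ZMod 2 => (∑ i, x i * t i) = b) with hSdef
  set pb := ∑ x ∈ S, bernoulliPMF n μ x with hpb
  have hpos : ∀ x, 0 ≤ bernoulliPMF n μ x := fun x => (bern_pos n μ hμ0 hμ1 x).le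
  · rw [← Finset.sum_filter_add_sum_filter_not Finset.univ
      (fun x : Fin n → ZMod 2 => (∑ i, x i * t i) = b)
      (fun x => (condBernoulliPMF n μ t b x) ^ α), ← hSdef]
    have h1 : ∀ x ∈ S, (condBernoulliPMF n μ t b x) ^ α
        = (bernoulliPMF n μ x) ^ α / pb ^ α := by
      intro x hx
      have hxb : (∑ i, x i * t i) = b := (Finset.mem_filter.mp hx).2
      rw [condBernoulliPMF, if_pos hxb, ← hSdef, ← hpb,
        Real.div_rpow (hpos x) (Finset.sum_nonneg fun x' _ => hpos x')]
    have h2 : ∀ x ∈ Finset.univ.filter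
        (fun x : Fin n → ZMod 2 => ¬(∑ i, x i * t i) = b),
        (condBernoulliPMF n μ t b x) ^ α = 0 := by
      intro x hx
      have hxb := (Finset.mem_filter.mp hx).2
      rw [condBernoulliPMF, if_neg hxb, zero_div, Real.zero_rpow hα0]
    rw [Finset.sum_congr rfl h1, Finset.sum_congr rfl h2, Finset.sum_const_zero, add_zero,
      ← Finset.sum_div]

lemma assemble (k : ℕ) (α pB Sb : ℝ) (hpB : 0 < pB) :
    (2:ℝ) ^ ((k:ℝ) * (α-1)) * pB ^ (1-α) * (Sb + pB * (((2:ℝ)^k)⁻¹ * pB) ^ (α-1))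
      = pB * (2:ℝ) ^ ((α-1) * (k:ℝ)) * (Sb / pB ^ α) + pB := by
  have h2 : (0:ℝ) ≤ (2:ℝ) := by norm_num
  have e1 : (((2:ℝ)^k)⁻¹ * pB) ^ (α-1)
      = ((2:ℝ) ^ ((k:ℝ) * (α-1)))⁻¹ * pB ^ (α-1) := by
    rw [Real.mul_rpow (by positivity) hpB.le, ← Real.rpow_natCast 2 k,
      Real.inv_rpow (Real.rpow_nonneg h2 _), ← Real.rpow_mul h2]
  have epb : pB ^ (1-α) = pB / pB ^ α := by
    rw [Real.rpow_sub hpB, Real.rpow_one]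
  have hpa : pB ^ α = pB * pB ^ (α-1) := by
    nth_rewrite 1 [show α = 1 + (α-1) by ring]
    rw [Real.rpow_add hpB, Real.rpow_one]
  have hTpos : (0:ℝ) < (2:ℝ) ^ ((k:ℝ) * (α-1)) := Real.rpow_pos_of_pos (by norm_num) _
  have hpβpos : (0:ℝ) < pB ^ (α-1) := Real.rpow_pos_of_pos hpB _
  rw [e1, epb, mul_comm (α-1) (k:ℝ), hpa]
  field_simp


/-- Averaging over all rank-`k` matrices `G ∈ 𝔽_2^{k×n}`, the exponentiated
Rényi divergence of order `α ∈ (1,2)` between the law of `(rG^⊤, ⟨r,t⟩)` for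
`r ∼ Ber_μ^{⊗n}` and `U_{𝔽_2^k} ⊗ Ber_p`, with `p = (1-(1-2μ)^{w(t)})/2`, is
at most `p 2^{(α-1)k} ∑_x P₁(x)^α + (1-p) 2^{(α-1)k} ∑_x P₀(x)^α + 1`. -/
theorem lpn_reduction_smoothing_bound
    (n k : ℕ) (hk : 1 ≤ k) (hkn : k ≤ n)
    (t : Fin n → ZMod 2) (ht : t ≠ 0)
    (μ : ℝ) (hμ0 : 0 < μ) (hμ1 : μ < 1)
    (α : ℝ) (hα1 : 1 < α) (hα2 : α < 2) :
    (1 / ((Finset.univ.filter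
        (fun G : Matrix (Fin k) (Fin n) (ZMod 2) => G.rank = k)).card : ℝ)) *
      ∑ G ∈ Finset.univ.filter
          (fun G : Matrix (Fin k) (Fin n) (ZMod 2) => G.rank = k),
        ∑ u : Fin k → ZMod 2, ∑ b : ZMod 2,
          (jointPMF n k μ t G u b) ^ α * (2 : ℝ) ^ ((k : ℝ) * (α - 1)) *
            (if b = 1 then (1 - (1 - 2 * μ) ^ hammingNorm t) / 2
              else 1 - (1 - (1 - 2 * μ) ^ hammingNorm t) / 2) ^ (1 - α)
    ≤ ((1 - (1 - 2 * μ) ^ hammingNorm t) / 2) * (2 : ℝ) ^ ((α - 1) * (k : ℝ)) *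
          (∑ x : Fin n → ZMod 2, (condBernoulliPMF n μ t 1 x) ^ α)
      + (1 - (1 - (1 - 2 * μ) ^ hammingNorm t) / 2) * (2 : ℝ) ^ ((α - 1) * (k : ℝ)) *
          (∑ x : Fin n → ZMod 2, (condBernoulliPMF n μ t 0 x) ^ α)
      + 1 := by
  classical
  have hα0 : α ≠ 0 := by linarith
  set c := (1 - 2*μ) ^ hammingNorm t with hc
  set p := (1 - c)/2 with hpdef
  have hwt : hammingNorm t ≠ 0 := by
    intro h
    exact ht (hammingNorm_eq_zero.mp h)
  have habs : |1 - 2*μ| < 1 := by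
    rw [abs_lt]; constructor <;> linarith
  have hcabs : |c| < 1 := by
    rw [hc, abs_pow]
    exact pow_lt_one₀ (abs_nonneg _) habs hwt
  have hp0 : 0 < p := by
    have := (abs_lt.mp hcabs).2; rw [hpdef]; linarith
  have hp1' : p < 1 := by
    have := (abs_lt.mp hcabs).1; rw [hpdef]; linarith
  have h1p : 0 < 1 - p := by linarith
  set ranked := Finset.univ.filter
    (fun G : Matrix (Fin k) (Fin n) (ZMod 2) => G.rank = k) with hranked
  set N := (ranked.card : ℝ) with hN
  set κ := (2:ℝ) ^ ((k:ℝ) * (α - 1)) with hκ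
  have hκpos : 0 < κ := Real.rpow_pos_of_pos (by norm_num) _
  have hb1 : ∑ x ∈ Finset.univ.filter
      (fun x : Fin n → ZMod 2 => (∑ i, x i * t i) = 1), bernoulliPMF n μ x = p := by
    rw [sum_bern_one n μ t]
  have hb0 : ∑ x ∈ Finset.univ.filter
      (fun x : Fin n → ZMod 2 => (∑ i, x i * t i) = 0), bernoulliPMF n μ x = 1 - p := by
    rw [sum_bern_zero n μ t]
  set Sig1 := ∑ x ∈ Finset.univ.filter
      (fun x : Fin n → ZMod 2 => (∑ i, x i * t i) = 1), (bernoulliPMF n μ x) ^ α with hSig1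
  set Sig0 := ∑ x ∈ Finset.univ.filter
      (fun x : Fin n → ZMod 2 => (∑ i, x i * t i) = 0), (bernoulliPMF n μ x) ^ α with hSig0
  have hexp : ∀ G : Matrix (Fin k) (Fin n) (ZMod 2),
      ∑ u : Fin k → ZMod 2, ∑ b : ZMod 2,
        (jointPMF n k μ t G u b) ^ α * κ * (if b = 1 then p else 1 - p) ^ (1 - α)
      = (∑ u : Fin k → ZMod 2, (jointPMF n k μ t G u 0) ^ α) * (κ * (1-p) ^ (1-α))
        + (∑ u : Fin k → ZMod 2, (jointPMF n k μ t G u 1) ^ α) * (κ * p ^ (1-α)) := by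
    intro G
    rw [Finset.sum_congr rfl (fun u (_ : u ∈ Finset.univ) => sum_zmod2
      (fun b => (jointPMF n k μ t G u b) ^ α * κ * (if b = 1 then p else 1 - p) ^ (1 - α))),
      Finset.sum_add_distrib, Finset.sum_mul, Finset.sum_mul]
    congr 1
    · apply Finset.sum_congr rfl
      intro u _
      rw [if_neg (by decide : ¬ (0:ZMod 2) = 1)]
      ring
    · apply Finset.sum_congr rfl
      intro u _
      rw [if_pos rfl]
      ring
  rw [Finset.sum_congr rfl (fun G (_ : G ∈ ranked) => hexp G), Finset.sum_add_distrib,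
    ← Finset.sum_mul, ← Finset.sum_mul, mul_add]
  have key0 := main_b n k hkn μ hμ0 hμ1 t 0 α hα1 hα2
  have key1 := main_b n k hkn μ hμ0 hμ1 t 1 α hα1 hα2
  rw [← hranked, ← hN, ← hSig0, hb0] at key0
  rw [← hranked, ← hN, ← hSig1, hb1] at key1
  have hcond1 := sum_cond_pow n μ t 1 α hα0 hμ0 hμ1
  have hcond0 := sum_cond_pow n μ t 0 α hα0 hμ0 hμ1
  rw [← hSig1, hb1] at hcond1
  rw [← hSig0, hb0] at hcond0
  have goal_rhs_eq : p * (2:ℝ) ^ ((α-1) * (k:ℝ)) *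
        (∑ x : Fin n → ZMod 2, (condBernoulliPMF n μ t 1 x) ^ α)
      + (1 - p) * (2:ℝ) ^ ((α-1) * (k:ℝ)) *
        (∑ x : Fin n → ZMod 2, (condBernoulliPMF n μ t 0 x) ^ α)
      + 1
      = (κ * (1-p) ^ (1-α)) * (Sig0 + (1-p) * (((2:ℝ)^k)⁻¹ * (1-p)) ^ (α-1))
        + (κ * p ^ (1-α)) * (Sig1 + p * (((2:ℝ)^k)⁻¹ * p) ^ (α-1)) := by
    rw [hcond1, hcond0]
    have a0 := assemble k α (1-p) Sig0 h1p
    have a1 := assemble k α p Sig1 hp0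
    rw [← hκ] at a0 a1
    rw [mul_comm κ ((1-p) ^ (1-α))] at a0
    rw [mul_comm κ (p ^ (1-α))] at a1
    rw [mul_comm ((1-p) ^ (1-α)) κ] at a0
    rw [mul_comm (p ^ (1-α)) κ] at a1
    rw [a0, a1]
    ring
  rw [goal_rhs_eq]
  apply add_le_add
  · calc 1/N * ((∑ G ∈ ranked, ∑ u : Fin k → ZMod 2, (jointPMF n k μ t G u 0) ^ α)
          * (κ * (1-p) ^ (1-α)))
        = (κ * (1-p) ^ (1-α))
          * (1/N * ∑ G ∈ ranked, ∑ u : Fin k → ZMod 2, (jointPMF n k μ t G u 0) ^ α) := by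
          ring
      _ ≤ _ := by
          apply mul_le_mul_of_nonneg_left key0
          have := Real.rpow_nonneg h1p.le (1-α)
          positivity
  · calc 1/N * ((∑ G ∈ ranked, ∑ u : Fin k → ZMod 2, (jointPMF n k μ t G u 1) ^ α)
          * (κ * p ^ (1-α)))
        = (κ * p ^ (1-α))
          * (1/N * ∑ G ∈ ranked, ∑ u : Fin k → ZMod 2, (jointPMF n k μ t G u 1) ^ α) := by
          ring
      _ ≤ _ := by
          apply mul_le_mul_of_nonneg_left key1
          have := Real.rpow_nonneg hp0.le (1-α)
          positivity
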